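/- Let n ≥ 1 and let F be a field with char(F) ≠ 2 and |F| ≥ n² + 1. Let φ, ψ : Σ_n → Σ_n be maps such that det(φ(x) + ψ(y)) = det(x + y) for all x, y ∈ Σ_n. Then ψ is injective. -/

import Mathlib

open Matrix

/-- The `F`-submodule of symmetric `n × n` matrices over `F` (the space `Σ_n`). -/
def symmSubmodule (F : Type*) [Field F] (n : ℕ) :
    Submodule F (Matrix (Fin n) (Fin n) F) where
  carrier := {a | aᵀ = a}
  add_mem' := by
    intro a b ha hb
    simp only [Set.mem_setOf_eq] at *
    rw [Matrix.transpose_add, ha, hb]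
  zero_mem' := Matrix.transpose_zero
  smul_mem' := by
    intro c a ha
    simp only [Set.mem_setOf_eq] at *
    rw [Matrix.transpose_smul, ha]



lemma key_det_lemma {F : Type*} [Field F] {n : ℕ} (hchar : ringChar F ≠ 2)
    (C : Matrix (Fin n) (Fin n) F) (hC : Cᵀ = C)
    (h : ∀ X : Matrix (Fin n) (Fin n) F, Xᵀ = X → (X + C).det = X.det) :
    C = 0 := by
  by_contra hC0
  haveI : Invertible (2 : F) := invertibleOfNonzero (Ring.two_ne_zero hchar)
  set B : LinearMap.BilinForm F (Fin n → F) := Matrix.toLinearMap₂' F C with hB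
  have hBapp : ∀ x y, B x y = x ⬝ᵥ C *ᵥ y := fun x y => Matrix.toLinearMap₂'_apply' C x y
  have hBsymm : LinearMap.IsSymm B := by
    rw [LinearMap.isSymm_def]
    intro x y
    simp only [RingHom.id_apply, hBapp]
    rw [Matrix.dotProduct_mulVec x C y, ← Matrix.mulVec_transpose, hC, dotProduct_comm]
  obtain ⟨v0, hv0⟩ := LinearMap.BilinForm.exists_orthogonal_basis (K := F) hBsymm
  set v : Module.Basis (Fin n) F (Fin n → F) :=
    v0.reindex (finCongr (Module.finrank_fin_fun F)) with hvdef
  have hv : ∀ i j : Fin n, i ≠ j → B (v i) (v j) = 0 := by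
    intro i j hij
    rw [hvdef]
    simp only [Module.Basis.coe_reindex, Function.comp_apply]
    exact hv0 (fun e => hij (by simpa using congrArg (finCongr (Module.finrank_fin_fun F)) e))
  set P : Matrix (Fin n) (Fin n) F := (Pi.basisFun F (Fin n)).toMatrix v with hPdef
  haveI : Invertible P := (Pi.basisFun F (Fin n)).invertibleToMatrix v
  set D : Matrix (Fin n) (Fin n) F := LinearMap.toMatrix₂ v v B with hDdef
  have hcong : Pᵀ * C * P = D := by
    have := LinearMap.toMatrix₂_mul_basis_toMatrix (Pi.basisFun F (Fin n)) (Pi.basisFun F (Fin n)) v v B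
    rwa [LinearMap.toMatrix₂_basisFun, LinearMap.toMatrix'_toLinearMap₂'] at this
  have hDdiag : D = Matrix.diagonal (fun i => D i i) := by
    ext i j
    by_cases hij : i = j
    · subst hij; simp
    · rw [Matrix.diagonal_apply_ne _ hij]
      rw [hDdef, LinearMap.toMatrix₂_apply]
      exact hv i j hij
  have hD0 : D ≠ 0 := by
    intro hD
    apply hC0
    have : (Pᵀ)⁻¹ * (Pᵀ * C * P) * P⁻¹ = 0 := by rw [hcong, hD]; simp
    rwa [← Matrix.mul_assoc, ← Matrix.mul_assoc, Matrix.nonsing_inv_mul _ (by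
        simpa [Matrix.det_transpose] using (Matrix.isUnit_iff_isUnit_det P).mp
          (isUnit_of_invertible P)),
      Matrix.one_mul, Matrix.mul_assoc, Matrix.mul_nonsing_inv _
        ((Matrix.isUnit_iff_isUnit_det P).mp (isUnit_of_invertible P)), Matrix.mul_one] at this
  obtain ⟨i₀, hi₀⟩ : ∃ i, D i i ≠ 0 := by
    by_contra hall
    push_neg at hall
    apply hD0
    rw [hDdiag]
    ext i j
    by_cases hij : i = j
    · subst hij; simp [hall]
    · simp [Matrix.diagonal_apply_ne _ hij]
  -- construct X
  set Y : Matrix (Fin n) (Fin n) F :=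
    Matrix.diagonal (fun j => if j = i₀ then 0 else 1 - D j j) with hYdef
  set Q : Matrix (Fin n) (Fin n) F := ⅟P with hQdef
  set X : Matrix (Fin n) (Fin n) F := Qᵀ * Y * Q with hXdef
  have hXsymm : Xᵀ = X := by
    rw [hXdef, Matrix.transpose_mul, Matrix.transpose_mul, Matrix.transpose_transpose, hYdef,
      Matrix.diagonal_transpose, Matrix.mul_assoc]
  have hXC : Pᵀ * (X + C) * P = Y + D := by
    rw [Matrix.mul_add, Matrix.add_mul, hcong, hXdef]
    congr 1
    rw [hQdef]
    calc Pᵀ * ((⅟P)ᵀ * Y * ⅟P) * P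
        = (Pᵀ * (⅟P)ᵀ) * Y * (⅟P * P) := by simp only [Matrix.mul_assoc]
      _ = Y := by
          rw [← Matrix.transpose_mul, invOf_mul_self]; simp
  have hdetY : Y.det = 0 := by
    rw [hYdef, Matrix.det_diagonal]
    exact Finset.prod_eq_zero (Finset.mem_univ i₀) (by simp)
  have hdetYD : (Y + D).det = D i₀ i₀ := by
    have : Y + D = Matrix.diagonal (fun j => if j = i₀ then D i₀ i₀ else 1) := by
      ext i j
      rcases eq_or_ne i j with rfl | hij
      · by_cases hi : i = i₀
        · subst hi; simp [hYdef]
        · simp [hYdef, hi]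
      · have hD' : D i j = 0 := by rw [hDdiag]; exact Matrix.diagonal_apply_ne _ hij
        simp [hYdef, Matrix.diagonal_apply_ne _ hij, hD']
    rw [this, Matrix.det_diagonal]
    rw [Finset.prod_eq_single i₀ (fun b _ hb => by simp [hb]) (by simp)]
    simp
  have hdet := h X hXsymm
  have h1 : ((Pᵀ * (X + C) * P)).det = Pᵀ.det * (X+C).det * P.det := by
    rw [Matrix.det_mul, Matrix.det_mul]
  have h2 : ((Pᵀ * X * P)).det = Pᵀ.det * X.det * P.det := by
    rw [Matrix.det_mul, Matrix.det_mul]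
  have hXdet : X.det = 0 := by
    rw [hXdef, Matrix.det_mul, Matrix.det_mul, hdetY, mul_zero, zero_mul]
  rw [hXC] at h1
  rw [hdetYD, hdet, hXdet, mul_zero, zero_mul] at h1
  exact hi₀ h1

/-- If `φ, ψ : Σ_n → Σ_n` satisfy `det (φ x + ψ y) = det (x + y)` for all symmetric
`x, y`, then `ψ` is injective. -/
theorem psi_injective_symm
    {F : Type*} [Field F] {n : ℕ} (hn : 1 ≤ n)
    (hchar : ringChar F ≠ 2) (hcard : (n ^ 2 + 1 : Cardinal) ≤ Cardinal.mk F)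
    (φ ψ : symmSubmodule F n → symmSubmodule F n)
    (h : ∀ x y : symmSubmodule F n,
      ((φ x : Matrix (Fin n) (Fin n) F) + (ψ y : Matrix (Fin n) (Fin n) F)).det
        = ((x : Matrix (Fin n) (Fin n) F) + (y : Matrix (Fin n) (Fin n) F)).det) :
    Function.Injective ψ := by
  intro y₁ y₂ hψ
  have hdets : ∀ x : symmSubmodule F n,
      ((x : Matrix (Fin n) (Fin n) F) + (y₁ : Matrix (Fin n) (Fin n) F)).det
        = ((x : Matrix (Fin n) (Fin n) F) + (y₂ : Matrix (Fin n) (Fin n) F)).det := by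
    intro x
    rw [← h x y₁, ← h x y₂, hψ]
  have hCsymm : ((y₁ : Matrix (Fin n) (Fin n) F) - (y₂ : Matrix (Fin n) (Fin n) F))ᵀ = (y₁ : Matrix (Fin n) (Fin n) F) - (y₂ : Matrix (Fin n) (Fin n) F) := by
    rw [Matrix.transpose_sub, y₁.2, y₂.2]
  have hkey : (y₁ : Matrix (Fin n) (Fin n) F) - (y₂ : Matrix (Fin n) (Fin n) F) = 0 := by
    apply key_det_lemma hchar _ hCsymm
    intro X hX
    have hXmem : X ∈ symmSubmodule F n := hX
    have hmem : X - (y₂ : Matrix (Fin n) (Fin n) F) ∈ symmSubmodule F n :=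
      Submodule.sub_mem _ hXmem y₂.2
    have := hdets ⟨X - (y₂ : Matrix (Fin n) (Fin n) F), hmem⟩
    simp only [Submodule.coe_mk] at this
    calc (X + ((y₁ : Matrix (Fin n) (Fin n) F) - (y₂ : Matrix (Fin n) (Fin n) F))).det
        = ((X - (y₂ : Matrix (Fin n) (Fin n) F)) + y₁).det := by congr 1; abel
      _ = ((X - (y₂ : Matrix (Fin n) (Fin n) F)) + y₂).det := this
      _ = X.det := by rw [sub_add_cancel]
  exact Subtype.ext (by rw [← sub_eq_zero]; exact hkey)
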